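/- Let L be the operator on functions f : ℤ^n → ℝ defined by (Lf)(x) = Σ_{a=1}^n Σ_{k ∈ ℤ, k≠0} (f(x + k e_a) − f(x))/k², restricted to a box B = [ℓ]^n. Then for every f : B → ℝ, Σ_{x ∈ B} (f(x) − ℓ^{−n} Σ_{y ∈ B} f(y))² ≤ ℓ · Σ_{x ∈ B} Σ_{a=1}^n Σ_{k : x + k e_a ∈ B, k ≠ 0} (f(x + k e_a) − f(x))²/k². -/

import Mathlib

open Finset

namespace Stmt6

variable (n ℓ : ℕ)

/-- The discrete box `[ℓ]^n`. -/
noncomputable def Box : Finset (Fin n → ℤ) := Fintype.piFinset fun _ : Fin n => Finset.Icc (1 : ℤ) (ℓ : ℤ)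

/-- Override the coordinates in `s` of `x` by those of `y`. -/
def ov (s : Finset (Fin n)) (x y : Fin n → ℤ) : Fin n → ℤ := fun a => if a ∈ s then y a else x a

/-- Averaging over the coordinates in `s`. -/
noncomputable def P (s : Finset (Fin n)) (f : (Fin n → ℤ) → ℝ) : (Fin n → ℤ) → ℝ :=
  fun x => ((ℓ : ℝ) ^ n)⁻¹ * ∑ y ∈ Box n ℓ, f (ov n s x y)

variable {n ℓ}

lemma card_Box : (Box n ℓ).card = ℓ ^ n := by
  simp [Box]

lemma ov_mem {s : Finset (Fin n)} {x y : Fin n → ℤ} (hx : x ∈ Box n ℓ) (hy : y ∈ Box n ℓ) :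
    ov n s x y ∈ Box n ℓ := by
  simp only [Box, Fintype.mem_piFinset] at *
  intro a
  by_cases h : a ∈ s <;> simp [ov, h, hx a, hy a]

lemma ov_ov_left (s : Finset (Fin n)) (x y z : Fin n → ℤ) :
    ov n s (ov n s x y) z = ov n s x z := by
  funext a; by_cases h : a ∈ s <;> simp [ov, h]

lemma ov_ov_cancel (s : Finset (Fin n)) (x y : Fin n → ℤ) :
    ov n s (ov n s x y) (ov n s y x) = x := by
  funext a; by_cases h : a ∈ s <;> simp [ov, h]

/-- Key change of variables: the involution `(x, y) ↦ (ov s x y, ov s y x)` of `Box × Box`. -/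
lemma sum_ov_swap (s : Finset (Fin n)) (F : (Fin n → ℤ) → (Fin n → ℤ) → ℝ) :
    ∑ x ∈ Box n ℓ, ∑ y ∈ Box n ℓ, F (ov n s x y) (ov n s y x)
      = ∑ x ∈ Box n ℓ, ∑ y ∈ Box n ℓ, F x y := by
  rw [← Finset.sum_product', ← Finset.sum_product']
  refine Finset.sum_nbij' (fun p => (ov n s p.1 p.2, ov n s p.2 p.1))
    (fun p => (ov n s p.1 p.2, ov n s p.2 p.1)) ?_ ?_ ?_ ?_ ?_
  · rintro ⟨x, y⟩ h
    simp only [Finset.mem_product] at h ⊢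
    exact ⟨ov_mem h.1 h.2, ov_mem h.2 h.1⟩
  · rintro ⟨x, y⟩ h
    simp only [Finset.mem_product] at h ⊢
    exact ⟨ov_mem h.1 h.2, ov_mem h.2 h.1⟩
  · rintro ⟨x, y⟩ _
    simp [ov_ov_cancel]
  · rintro ⟨x, y⟩ _
    simp [ov_ov_cancel]
  · rintro ⟨x, y⟩ _
    rfl

lemma sum_ov_const (s : Finset (Fin n)) (g : (Fin n → ℤ) → ℝ) :
    ∑ x ∈ Box n ℓ, ∑ y ∈ Box n ℓ, g (ov n s x y) = (ℓ : ℝ) ^ n * ∑ x ∈ Box n ℓ, g x := by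
  have h := sum_ov_swap (ℓ := ℓ) s (fun z _ => g z)
  rw [h, Finset.mul_sum]
  refine Finset.sum_congr rfl fun x _ => ?_
  rw [Finset.sum_const, nsmul_eq_mul, card_Box]
  push_cast
  ring

section withpos

variable (hℓ : 0 < ℓ)
include hℓ

lemma pow_ne : ((ℓ : ℝ) ^ n) ≠ 0 :=
  pow_ne_zero n (by exact_mod_cast hℓ.ne')

lemma P_empty (f : (Fin n → ℤ) → ℝ) : P n ℓ ∅ f = f := by
  funext x
  have : ∀ y ∈ Box n ℓ, f (ov n ∅ x y) = f x := by
    intro y _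
    have hov : ov n ∅ x y = x := by funext a; simp [ov]
    rw [hov]
  rw [P, Finset.sum_congr rfl this, Finset.sum_const, nsmul_eq_mul, card_Box]
  push_cast
  exact inv_mul_cancel_left₀ (pow_ne hℓ) _

lemma P_idem (s : Finset (Fin n)) (f : (Fin n → ℤ) → ℝ) : P n ℓ s (P n ℓ s f) = P n ℓ s f := by
  funext x
  rw [P]
  have : ∀ y ∈ Box n ℓ, P n ℓ s f (ov n s x y) = P n ℓ s f x := by
    intro y _
    rw [P, P]
    congr 1
    refine Finset.sum_congr rfl fun w _ => ?_
    rw [ov_ov_left]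
  rw [Finset.sum_congr rfl this, Finset.sum_const, nsmul_eq_mul, card_Box]
  push_cast
  rw [← mul_assoc, inv_mul_cancel₀ (pow_ne hℓ), one_mul]

lemma P_sub (s : Finset (Fin n)) (f g : (Fin n → ℤ) → ℝ) :
    P n ℓ s (f - g) = P n ℓ s f - P n ℓ s g := by
  funext x
  simp only [P, Pi.sub_apply, Finset.sum_sub_distrib, mul_sub]

/-- `P s ∘ P {a} = P (insert a s)`. -/
lemma P_insert (s : Finset (Fin n)) (a : Fin n) (f : (Fin n → ℤ) → ℝ) :
    P n ℓ s (P n ℓ {a} f) = P n ℓ (insert a s) f := by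
  funext x
  have key : ∀ y w : Fin n → ℤ,
      ov n {a} (ov n s x y) w = ov n (insert a s) x (ov n {a} y w) := by
    intro y w
    funext b
    by_cases hb : b = a
    · subst hb; simp [ov]
    · by_cases hbs : b ∈ s <;> simp [ov, hb, hbs]
  calc P n ℓ s (P n ℓ {a} f) x
      = ((ℓ : ℝ) ^ n)⁻¹ * (((ℓ : ℝ) ^ n)⁻¹ *
          ∑ y ∈ Box n ℓ, ∑ w ∈ Box n ℓ, f (ov n {a} (ov n s x y) w)) := by
        rw [P]
        congr 1
        rw [Finset.mul_sum]
        refine Finset.sum_congr rfl fun y _ => ?_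
        rw [P]
    _ = ((ℓ : ℝ) ^ n)⁻¹ * (((ℓ : ℝ) ^ n)⁻¹ *
          ∑ y ∈ Box n ℓ, ∑ w ∈ Box n ℓ, f (ov n (insert a s) x (ov n {a} y w))) := by
        simp_rw [key]
    _ = ((ℓ : ℝ) ^ n)⁻¹ * (((ℓ : ℝ) ^ n)⁻¹ *
          ((ℓ : ℝ) ^ n * ∑ y ∈ Box n ℓ, f (ov n (insert a s) x y))) := by
        rw [← sum_ov_const {a} (fun z => f (ov n (insert a s) x z)),
          sum_ov_swap {a} (fun z _ => f (ov n (insert a s) x z))]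
    _ = P n ℓ (insert a s) f x := by
        rw [P, inv_mul_cancel_left₀ (pow_ne hℓ)]

/-- Self-adjointness of `P s` w.r.t. the counting inner product on the box. -/
lemma P_selfadj (s : Finset (Fin n)) (f g : (Fin n → ℤ) → ℝ) :
    ∑ x ∈ Box n ℓ, P n ℓ s f x * g x = ∑ x ∈ Box n ℓ, f x * P n ℓ s g x := by
  have h := sum_ov_swap (ℓ := ℓ) s (fun z w => f z * g (ov n s z w))
  have h2 : ∀ x ∈ Box n ℓ, ∀ y ∈ Box n ℓ,
      f (ov n s x y) * g x = f (ov n s x y) * g (ov n s (ov n s x y) (ov n s y x)) := by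
    intro x _ y _
    rw [ov_ov_cancel]
  calc ∑ x ∈ Box n ℓ, P n ℓ s f x * g x
      = ((ℓ : ℝ) ^ n)⁻¹ * ∑ x ∈ Box n ℓ, ∑ y ∈ Box n ℓ, f (ov n s x y) * g x := by
        rw [Finset.mul_sum]
        refine Finset.sum_congr rfl fun x _ => ?_
        rw [P, mul_assoc, Finset.sum_mul]
    _ = ((ℓ : ℝ) ^ n)⁻¹ * ∑ x ∈ Box n ℓ, ∑ y ∈ Box n ℓ, f x * g (ov n s x y) := by
        congr 1
        rw [← h]
        exact Finset.sum_congr rfl fun x hx => Finset.sum_congr rfl fun y hy => h2 x hx y hy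
    _ = ∑ x ∈ Box n ℓ, f x * P n ℓ s g x := by
        rw [Finset.mul_sum]
        refine Finset.sum_congr rfl fun x _ => ?_
        rw [P, mul_left_comm]
        congr 1
        exact (Finset.mul_sum _ _ _).symm

/-- `P s` is a contraction in `ℓ²` of the box. -/
lemma P_contract (s : Finset (Fin n)) (f : (Fin n → ℤ) → ℝ) :
    ∑ x ∈ Box n ℓ, (P n ℓ s f x) ^ 2 ≤ ∑ x ∈ Box n ℓ, (f x) ^ 2 := by
  have step : ∀ x ∈ Box n ℓ,
      (P n ℓ s f x) ^ 2 ≤ ((ℓ : ℝ) ^ n)⁻¹ * ∑ y ∈ Box n ℓ, (f (ov n s x y)) ^ 2 := by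
    intro x _
    rw [P, mul_pow]
    have hJ : (∑ y ∈ Box n ℓ, f (ov n s x y)) ^ 2
        ≤ ((Box n ℓ).card : ℝ) * ∑ y ∈ Box n ℓ, (f (ov n s x y)) ^ 2 :=
      sq_sum_le_card_mul_sum_sq
    rw [card_Box] at hJ
    push_cast at hJ
    calc (((ℓ : ℝ) ^ n)⁻¹) ^ 2 * (∑ y ∈ Box n ℓ, f (ov n s x y)) ^ 2
        ≤ (((ℓ : ℝ) ^ n)⁻¹) ^ 2 * ((ℓ : ℝ) ^ n * ∑ y ∈ Box n ℓ, (f (ov n s x y)) ^ 2) := by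
          apply mul_le_mul_of_nonneg_left hJ (by positivity)
      _ = ((ℓ : ℝ) ^ n)⁻¹ * ∑ y ∈ Box n ℓ, (f (ov n s x y)) ^ 2 := by
          rw [sq]
          rw [mul_assoc, inv_mul_cancel_left₀ (pow_ne hℓ)]
  calc ∑ x ∈ Box n ℓ, (P n ℓ s f x) ^ 2
      ≤ ∑ x ∈ Box n ℓ, ((ℓ : ℝ) ^ n)⁻¹ * ∑ y ∈ Box n ℓ, (f (ov n s x y)) ^ 2 :=
        Finset.sum_le_sum step
    _ = ((ℓ : ℝ) ^ n)⁻¹ * ∑ x ∈ Box n ℓ, ∑ y ∈ Box n ℓ, (f (ov n s x y)) ^ 2 := by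
        rw [Finset.mul_sum]
    _ = ∑ x ∈ Box n ℓ, (f x) ^ 2 := by
        rw [sum_ov_const s (fun z => f z ^ 2), inv_mul_cancel_left₀ (pow_ne hℓ)]

/-- Tensorization of the variance. -/
lemma tensorize (s : Finset (Fin n)) (f : (Fin n → ℤ) → ℝ) :
    ∑ x ∈ Box n ℓ, (f x - P n ℓ s f x) ^ 2
      ≤ ∑ a ∈ s, ∑ x ∈ Box n ℓ, (f x - P n ℓ {a} f x) ^ 2 := by
  induction s using Finset.induction_on with
  | empty =>
      simp [P_empty hℓ]
  | @insert a s ha ih =>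
      have hPG : P n ℓ s f - P n ℓ (insert a s) f = P n ℓ s (f - P n ℓ {a} f) := by
        rw [P_sub hℓ, P_insert hℓ]
      have hPF : P n ℓ s (f - P n ℓ s f) = 0 := by
        rw [P_sub hℓ, P_idem hℓ, sub_self]
      have cross : ∑ x ∈ Box n ℓ,
          (f x - P n ℓ s f x) * (P n ℓ s (f - P n ℓ {a} f)) x = 0 := by
        have h1 : ∑ x ∈ Box n ℓ, (f - P n ℓ s f) x * (P n ℓ s (f - P n ℓ {a} f)) x
            = ∑ x ∈ Box n ℓ, (P n ℓ s (f - P n ℓ s f)) x * (f - P n ℓ {a} f) x := by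
          rw [P_selfadj hℓ s (f - P n ℓ s f) (f - P n ℓ {a} f)]
        simp only [Pi.sub_apply] at h1
        rw [h1, hPF]
        simp
      have expand : ∀ x ∈ Box n ℓ, (f x - P n ℓ (insert a s) f x) ^ 2
          = (f x - P n ℓ s f x) ^ 2
            + 2 * ((f x - P n ℓ s f x) * (P n ℓ s (f - P n ℓ {a} f)) x)
            + ((P n ℓ s (f - P n ℓ {a} f)) x) ^ 2 := by
        intro x _
        have hx : (P n ℓ s (f - P n ℓ {a} f)) x = P n ℓ s f x - P n ℓ (insert a s) f x := by
          rw [← hPG]; rfl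
        rw [hx]; ring
      calc ∑ x ∈ Box n ℓ, (f x - P n ℓ (insert a s) f x) ^ 2
          = ∑ x ∈ Box n ℓ, ((f x - P n ℓ s f x) ^ 2
              + 2 * ((f x - P n ℓ s f x) * (P n ℓ s (f - P n ℓ {a} f)) x)
              + ((P n ℓ s (f - P n ℓ {a} f)) x) ^ 2) := Finset.sum_congr rfl expand
        _ = ∑ x ∈ Box n ℓ, (f x - P n ℓ s f x) ^ 2
              + 2 * ∑ x ∈ Box n ℓ, ((f x - P n ℓ s f x) * (P n ℓ s (f - P n ℓ {a} f)) x)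
              + ∑ x ∈ Box n ℓ, ((P n ℓ s (f - P n ℓ {a} f)) x) ^ 2 := by
            rw [Finset.sum_add_distrib, Finset.sum_add_distrib, ← Finset.mul_sum]
        _ = ∑ x ∈ Box n ℓ, (f x - P n ℓ s f x) ^ 2
              + ∑ x ∈ Box n ℓ, ((P n ℓ s (f - P n ℓ {a} f)) x) ^ 2 := by
            rw [cross, mul_zero, add_zero]
        _ ≤ (∑ b ∈ s, ∑ x ∈ Box n ℓ, (f x - P n ℓ {b} f x) ^ 2)
              + ∑ x ∈ Box n ℓ, (f x - P n ℓ {a} f x) ^ 2 := by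
            refine add_le_add ih ?_
            have := P_contract hℓ s (f - P n ℓ {a} f)
            simpa using this
        _ = ∑ b ∈ insert a s, ∑ x ∈ Box n ℓ, (f x - P n ℓ {b} f x) ^ 2 := by
            rw [Finset.sum_insert ha, add_comm]

omit hℓ in
lemma ov_singleton (a : Fin n) (x y : Fin n → ℤ) :
    ov n {a} x y = Function.update x a (y a) := by
  funext b
  by_cases h : b = a
  · subst h; simp [ov]
  · simp [ov, h, Function.update_apply]

omit hℓ in
lemma fiber (a : Fin n) (g : ℤ → ℝ) :
    ∑ y ∈ Box n ℓ, g (y a)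
      = (ℓ : ℝ) ^ (n - 1) * ∑ t ∈ Finset.Icc (1 : ℤ) (ℓ : ℤ), g t := by
  have key := Finset.prod_univ_sum (κ := fun _ : Fin n => ℤ)
      (fun _ : Fin n => Finset.Icc (1 : ℤ) (ℓ : ℤ)) (fun i t => if i = a then g t else 1)
  have hR : ∀ y : Fin n → ℤ, (∏ i : Fin n, if i = a then g (y i) else 1) = g (y a) := by
    intro y
    rw [Finset.prod_ite_eq' Finset.univ a (fun i => g (y i))]
    simp
  have hL : (∏ i : Fin n, ∑ t ∈ Finset.Icc (1 : ℤ) (ℓ : ℤ), if i = a then g t else 1)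
      = (∑ t ∈ Finset.Icc (1 : ℤ) (ℓ : ℤ), g t) * (ℓ : ℝ) ^ (n - 1) := by
    rw [← Finset.mul_prod_erase Finset.univ _ (Finset.mem_univ a)]
    have h1 : (∑ t ∈ Finset.Icc (1 : ℤ) (ℓ : ℤ), if a = a then g t else 1)
        = ∑ t ∈ Finset.Icc (1 : ℤ) (ℓ : ℤ), g t := by simp
    have h2 : (∏ i ∈ Finset.univ.erase a, ∑ t ∈ Finset.Icc (1 : ℤ) (ℓ : ℤ),
        if i = a then g t else 1) = (ℓ : ℝ) ^ (n - 1) := by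
      have : ∀ i ∈ Finset.univ.erase a,
          (∑ t ∈ Finset.Icc (1 : ℤ) (ℓ : ℤ), if i = a then g t else 1) = (ℓ : ℝ) := by
        intro i hi
        have hia : i ≠ a := (Finset.mem_erase.1 hi).1
        simp [hia]
      rw [Finset.prod_congr rfl this, Finset.prod_const, Finset.card_erase_of_mem
        (Finset.mem_univ a), Finset.card_univ, Fintype.card_fin]
    rw [h1, h2]
  have hsum : ∑ y ∈ Fintype.piFinset (fun _ : Fin n => Finset.Icc (1 : ℤ) (ℓ : ℤ)), g (y a)
      = ∑ y ∈ Fintype.piFinset (fun _ : Fin n => Finset.Icc (1 : ℤ) (ℓ : ℤ)),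
          ∏ i : Fin n, if i = a then g (y i) else 1 :=
    Finset.sum_congr rfl fun y _ => (hR y).symm
  simp only [Box]
  rw [hsum, ← key, hL, mul_comm]

lemma oneD (a : Fin n) (f : (Fin n → ℤ) → ℝ) :
    ∑ x ∈ Box n ℓ, (f x - P n ℓ {a} f x) ^ 2
      ≤ (ℓ : ℝ) * ∑ x ∈ Box n ℓ, ∑ k ∈ (Finset.Icc (1 - x a) ((ℓ : ℤ) - x a)).erase 0,
          (f (Function.update x a (x a + k)) - f x) ^ 2 / (k : ℝ) ^ 2 := by
  have hn : 0 < n := a.pos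
  have hc : ((ℓ : ℝ) ^ n)⁻¹ * (ℓ : ℝ) ^ (n - 1) = (ℓ : ℝ)⁻¹ := by
    have hpow : (ℓ : ℝ) ^ n = (ℓ : ℝ) * (ℓ : ℝ) ^ (n - 1) := by
      conv_lhs => rw [← Nat.sub_add_cancel hn]
      rw [pow_succ]
      ring
    have hl0 : (ℓ : ℝ) ≠ 0 := by exact_mod_cast hℓ.ne'
    rw [hpow, mul_inv, mul_assoc, inv_mul_cancel₀ (pow_ne_zero _ hl0), mul_one]
  -- Step 1 + 2: Jensen and fiber counting
  have step12 : ∀ x ∈ Box n ℓ, (f x - P n ℓ {a} f x) ^ 2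
      ≤ (ℓ : ℝ)⁻¹ * ∑ t ∈ Finset.Icc (1 : ℤ) (ℓ : ℤ),
          (f (Function.update x a t) - f x) ^ 2 := by
    intro x _
    have hmean : f x - P n ℓ {a} f x
        = ((ℓ : ℝ) ^ n)⁻¹ * ∑ y ∈ Box n ℓ, (f x - f (ov n {a} x y)) := by
      rw [Finset.sum_sub_distrib, mul_sub, P, Finset.sum_const, nsmul_eq_mul, card_Box]
      push_cast
      rw [← mul_assoc, inv_mul_cancel₀ (pow_ne hℓ), one_mul]
    have hJ : (∑ y ∈ Box n ℓ, (f x - f (ov n {a} x y))) ^ 2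
        ≤ ((Box n ℓ).card : ℝ) * ∑ y ∈ Box n ℓ, (f x - f (ov n {a} x y)) ^ 2 :=
      sq_sum_le_card_mul_sum_sq
    rw [card_Box] at hJ
    push_cast at hJ
    have hfib : ∑ y ∈ Box n ℓ, (f x - f (ov n {a} x y)) ^ 2
        = (ℓ : ℝ) ^ (n - 1) * ∑ t ∈ Finset.Icc (1 : ℤ) (ℓ : ℤ),
            (f (Function.update x a t) - f x) ^ 2 := by
      have : ∀ y ∈ Box n ℓ, (f x - f (ov n {a} x y)) ^ 2
          = (f (Function.update x a (y a)) - f x) ^ 2 := by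
        intro y _
        rw [ov_singleton]
        ring
      rw [Finset.sum_congr rfl this,
        fiber a (fun t => (f (Function.update x a t) - f x) ^ 2)]
    calc (f x - P n ℓ {a} f x) ^ 2
        = (((ℓ : ℝ) ^ n)⁻¹) ^ 2 * (∑ y ∈ Box n ℓ, (f x - f (ov n {a} x y))) ^ 2 := by
          rw [hmean, mul_pow]
      _ ≤ (((ℓ : ℝ) ^ n)⁻¹) ^ 2 * ((ℓ : ℝ) ^ n *
            ∑ y ∈ Box n ℓ, (f x - f (ov n {a} x y)) ^ 2) :=
          mul_le_mul_of_nonneg_left hJ (by positivity)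
      _ = ((ℓ : ℝ) ^ n)⁻¹ * ∑ y ∈ Box n ℓ, (f x - f (ov n {a} x y)) ^ 2 := by
          rw [sq, mul_assoc, inv_mul_cancel_left₀ (pow_ne hℓ)]
      _ = (ℓ : ℝ)⁻¹ * ∑ t ∈ Finset.Icc (1 : ℤ) (ℓ : ℤ),
            (f (Function.update x a t) - f x) ^ 2 := by
          rw [hfib, ← mul_assoc, hc]
  -- Step 3: 1D Poincaré with the 1/k² weights
  have step3 : ∀ x ∈ Box n ℓ, ∑ t ∈ Finset.Icc (1 : ℤ) (ℓ : ℤ),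
        (f (Function.update x a t) - f x) ^ 2
      ≤ (ℓ : ℝ) ^ 2 * ∑ k ∈ (Finset.Icc (1 - x a) ((ℓ : ℤ) - x a)).erase 0,
          (f (Function.update x a (x a + k)) - f x) ^ 2 / (k : ℝ) ^ 2 := by
    intro x hx
    have hxa : (1 : ℤ) ≤ x a ∧ x a ≤ (ℓ : ℤ) := by
      have := (Fintype.mem_piFinset.1 hx) a
      rwa [Finset.mem_Icc] at this
    have hre : ∑ k ∈ (Finset.Icc (1 - x a) ((ℓ : ℤ) - x a)).erase 0,
          (f (Function.update x a (x a + k)) - f x) ^ 2 / (k : ℝ) ^ 2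
        = ∑ t ∈ (Finset.Icc (1 : ℤ) (ℓ : ℤ)).erase (x a),
          (f (Function.update x a t) - f x) ^ 2 / ((t - x a : ℤ) : ℝ) ^ 2 := by
      refine Finset.sum_nbij' (fun k => x a + k) (fun t => t - x a) ?_ ?_ ?_ ?_ ?_
      · intro k hk
        simp only [Finset.mem_erase, Finset.mem_Icc] at hk ⊢
        omega
      · intro t ht
        simp only [Finset.mem_erase, Finset.mem_Icc] at ht ⊢
        omega
      · intro k _; show x a + k - x a = k; omega
      · intro t _; show x a + (t - x a) = t; omega
      · intro k _
        have h1 : x a + k - x a = k := by ring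
        rw [h1]
    rw [hre]
    have hmem : x a ∈ Finset.Icc (1 : ℤ) (ℓ : ℤ) := Finset.mem_Icc.2 hxa
    rw [← Finset.sum_erase_add _ _ hmem, Function.update_eq_self, sub_self,
      zero_pow (by norm_num), add_zero, Finset.mul_sum]
    refine Finset.sum_le_sum fun t ht => ?_
    have ht' := Finset.mem_erase.1 ht
    have htIcc := Finset.mem_Icc.1 ht'.2
    have hkne : ((t - x a : ℤ) : ℝ) ≠ 0 := by
      have : t - x a ≠ 0 := by omega
      exact_mod_cast this
    have hk2 : ((t - x a : ℤ) : ℝ) ^ 2 ≤ (ℓ : ℝ) ^ 2 := by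
      have hZ : (t - x a) ^ 2 ≤ (ℓ : ℤ) ^ 2 := by nlinarith [hxa.1, hxa.2, htIcc.1, htIcc.2]
      exact_mod_cast hZ
    set d := f (Function.update x a t) - f x with hd
    calc d ^ 2 = d ^ 2 / ((t - x a : ℤ) : ℝ) ^ 2 * ((t - x a : ℤ) : ℝ) ^ 2 :=
          (div_mul_cancel₀ _ (pow_ne_zero 2 hkne)).symm
      _ ≤ d ^ 2 / ((t - x a : ℤ) : ℝ) ^ 2 * (ℓ : ℝ) ^ 2 :=
          mul_le_mul_of_nonneg_left hk2 (by positivity)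
      _ = (ℓ : ℝ) ^ 2 * (d ^ 2 / ((t - x a : ℤ) : ℝ) ^ 2) := by ring
  -- assemble
  have hl0 : (0 : ℝ) < (ℓ : ℝ) := by exact_mod_cast hℓ
  calc ∑ x ∈ Box n ℓ, (f x - P n ℓ {a} f x) ^ 2
      ≤ ∑ x ∈ Box n ℓ, (ℓ : ℝ)⁻¹ * ∑ t ∈ Finset.Icc (1 : ℤ) (ℓ : ℤ),
          (f (Function.update x a t) - f x) ^ 2 := Finset.sum_le_sum step12
    _ ≤ ∑ x ∈ Box n ℓ, (ℓ : ℝ)⁻¹ * ((ℓ : ℝ) ^ 2 *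
          ∑ k ∈ (Finset.Icc (1 - x a) ((ℓ : ℤ) - x a)).erase 0,
            (f (Function.update x a (x a + k)) - f x) ^ 2 / (k : ℝ) ^ 2) := by
        refine Finset.sum_le_sum fun x hx => ?_
        exact mul_le_mul_of_nonneg_left (step3 x hx) (by positivity)
    _ = (ℓ : ℝ) * ∑ x ∈ Box n ℓ, ∑ k ∈ (Finset.Icc (1 - x a) ((ℓ : ℤ) - x a)).erase 0,
          (f (Function.update x a (x a + k)) - f x) ^ 2 / (k : ℝ) ^ 2 := by
        rw [Finset.mul_sum]
        refine Finset.sum_congr rfl fun x _ => ?_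
        rw [← mul_assoc]
        congr 1
        rw [sq, ← mul_assoc, inv_mul_cancel₀ hl0.ne', one_mul]

end withpos
end Stmt6

open Finset

/-- Poincaré inequality for the Cauchy-increment random walk on the
box `B = [ℓ]^n ⊂ ℤ^n`: the variance of `f` over `B` is at most `ℓ` times the
Dirichlet form of `f` over `B`. -/
theorem stmt_6 (n ℓ : ℕ) (hℓ : 0 < ℓ) (f : (Fin n → ℤ) → ℝ) :
    ∑ x ∈ Fintype.piFinset (fun _ : Fin n => Finset.Icc (1 : ℤ) (ℓ : ℤ)),
        (f x - ((ℓ : ℝ) ^ n)⁻¹ *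
            ∑ y ∈ Fintype.piFinset (fun _ : Fin n => Finset.Icc (1 : ℤ) (ℓ : ℤ)), f y) ^ 2
      ≤ (ℓ : ℝ) *
        ∑ x ∈ Fintype.piFinset (fun _ : Fin n => Finset.Icc (1 : ℤ) (ℓ : ℤ)),
          ∑ a : Fin n, ∑ k ∈ (Finset.Icc (1 - x a) ((ℓ : ℤ) - x a)).erase 0,
            (f (Function.update x a (x a + k)) - f x) ^ 2 / (k : ℝ) ^ 2 := by
  have hbox : Fintype.piFinset (fun _ : Fin n => Finset.Icc (1 : ℤ) (ℓ : ℤ))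
      = Stmt6.Box n ℓ := rfl
  rw [hbox]
  have hP : ∀ x : Fin n → ℤ, Stmt6.P n ℓ Finset.univ f x
      = ((ℓ : ℝ) ^ n)⁻¹ * ∑ y ∈ Stmt6.Box n ℓ, f y := by
    intro x
    rw [Stmt6.P]
    congr 1
    refine Finset.sum_congr rfl fun y _ => ?_
    congr 1
    funext b
    simp [Stmt6.ov]
  calc ∑ x ∈ Stmt6.Box n ℓ,
        (f x - ((ℓ : ℝ) ^ n)⁻¹ * ∑ y ∈ Stmt6.Box n ℓ, f y) ^ 2
      = ∑ x ∈ Stmt6.Box n ℓ, (f x - Stmt6.P n ℓ Finset.univ f x) ^ 2 :=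
        Finset.sum_congr rfl fun x _ => by rw [hP x]
    _ ≤ ∑ a ∈ Finset.univ, ∑ x ∈ Stmt6.Box n ℓ, (f x - Stmt6.P n ℓ {a} f x) ^ 2 :=
        Stmt6.tensorize hℓ Finset.univ f
    _ ≤ ∑ a : Fin n, (ℓ : ℝ) * ∑ x ∈ Stmt6.Box n ℓ,
          ∑ k ∈ (Finset.Icc (1 - x a) ((ℓ : ℤ) - x a)).erase 0,
            (f (Function.update x a (x a + k)) - f x) ^ 2 / (k : ℝ) ^ 2 :=
        Finset.sum_le_sum fun a _ => Stmt6.oneD hℓ a f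
    _ = (ℓ : ℝ) * ∑ a : Fin n, ∑ x ∈ Stmt6.Box n ℓ,
          ∑ k ∈ (Finset.Icc (1 - x a) ((ℓ : ℤ) - x a)).erase 0,
            (f (Function.update x a (x a + k)) - f x) ^ 2 / (k : ℝ) ^ 2 := by
        rw [Finset.mul_sum]
    _ = (ℓ : ℝ) * ∑ x ∈ Stmt6.Box n ℓ, ∑ a : Fin n,
          ∑ k ∈ (Finset.Icc (1 - x a) ((ℓ : ℤ) - x a)).erase 0,
            (f (Function.update x a (x a + k)) - f x) ^ 2 / (k : ℝ) ^ 2 := by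
        rw [Finset.sum_comm]
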